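/- (Balas) Let P₁,…,P_k ⊆ ℝ^n be nonempty polytopes with extended formulations P_i = {x : ∃ y_i, A_i x + B_i y_i ≤ d_i}. Then conv(P₁ ∪ ⋯ ∪ P_k) = { x : ∃ x¹,…,x^k, y¹,…,y^k, λ ∈ ℝ^k, x = x¹+⋯+x^k, λ₁+⋯+λ_k = 1, λ ≥ 0, and A_i x^i + B_i y^i − λ_i d_i ≤ 0 for all i }. -/

import Mathlib

open Finset

private lemma balas_rec_zero {n mm qq : ℕ} (A : Matrix (Fin mm) (Fin n) ℝ)
    (B : Matrix (Fin mm) (Fin qq) ℝ) (d : Fin mm → ℝ) (P : Set (Fin n → ℝ))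
    (hP : P = {x | ∃ y, A.mulVec x + B.mulVec y ≤ d})
    (hne : P.Nonempty) (hbdd : Bornology.IsBounded P)
    {x' : Fin n → ℝ} {y' : Fin qq → ℝ}
    (h : A.mulVec x' + B.mulVec y' ≤ 0) : x' = 0 := by
  obtain ⟨x0, hx0⟩ := hne
  rw [hP] at hx0
  obtain ⟨y0, hy0⟩ := hx0
  have hmem : ∀ t : ℝ, 0 ≤ t → x0 + t • x' ∈ P := by
    intro t ht
    rw [hP]
    refine ⟨y0 + t • y', fun j => ?_⟩
    have h1 := hy0 j
    have h2 := h j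
    simp only [Matrix.mulVec_add, Matrix.mulVec_smul, Pi.add_apply, Pi.smul_apply,
      Pi.zero_apply, smul_eq_mul] at h1 h2 ⊢
    nlinarith
  obtain ⟨C, hC⟩ := hbdd.exists_norm_le
  by_contra hx'
  have hnorm : ‖x'‖ ≠ 0 := norm_ne_zero_iff.mpr hx'
  have hpos : 0 < ‖x'‖ := norm_pos_iff.mpr hx'
  set t := (C + ‖x0‖ + 1) / ‖x'‖ with ht
  have ht0 : 0 ≤ t := by
    have : 0 ≤ C := le_trans (norm_nonneg _) (hC _ ((hP ▸ ⟨y0, hy0⟩ : x0 ∈ P)))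
    positivity
  have hmem' := hC _ (hmem t ht0)
  have : t * ‖x'‖ - ‖x0‖ ≤ ‖x0 + t • x'‖ := by
    have := norm_add_le (-(x0 + t • x')) x0
    simp only [neg_add_rev, norm_neg] at this ⊢
    have h2 : ‖t • x'‖ = t * ‖x'‖ := by rw [norm_smul, Real.norm_of_nonneg ht0]
    have h3 : ‖-(t • x') + -x0 + x0‖ = t * ‖x'‖ := by
      simp [h2]
    calc t * ‖x'‖ - ‖x0‖ = ‖-(t • x') + -x0 + x0‖ - ‖x0‖ := by rw [h3]
      _ ≤ ‖-(t • x') + -x0‖ := by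
          have := norm_add_le (-(t • x') + -x0) x0; linarith
      _ = ‖x0 + t • x'‖ := by rw [← norm_neg]; ring_nf
  have htx : t * ‖x'‖ = C + ‖x0‖ + 1 := by
    rw [ht]; field_simp
  linarith

theorem stmt15 (n k : ℕ) (m q : Fin k → ℕ)
    (A : ∀ i, Matrix (Fin (m i)) (Fin n) ℝ)
    (B : ∀ i, Matrix (Fin (m i)) (Fin (q i)) ℝ)
    (d : ∀ i, Fin (m i) → ℝ)
    (P : Fin k → Set (Fin n → ℝ))
    (hP : ∀ i, P i = {x | ∃ y : Fin (q i) → ℝ,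
      (A i).mulVec x + (B i).mulVec y ≤ d i})
    (hne : ∀ i, (P i).Nonempty)
    (hbdd : ∀ i, Bornology.IsBounded (P i)) :
    convexHull ℝ (⋃ i, P i) =
      {x : Fin n → ℝ | ∃ (xs : Fin k → Fin n → ℝ) (ys : ∀ i, Fin (q i) → ℝ)
        (lam : Fin k → ℝ),
        x = ∑ i, xs i ∧ (∑ i, lam i) = 1 ∧ (∀ i, 0 ≤ lam i) ∧
        ∀ i, (A i).mulVec (xs i) + (B i).mulVec (ys i) ≤ lam i • d i} := by
  apply le_antisymm
  · -- convex hull ⊆ RHS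
    apply convexHull_min
    · rintro x hx
      simp only [Set.mem_iUnion] at hx
      obtain ⟨i, hxi⟩ := hx
      rw [hP i] at hxi
      obtain ⟨y, hy⟩ := hxi
      refine ⟨fun j => if j = i then x else 0,
        fun j => if h : j = i then h ▸ y else 0,
        fun j => if j = i then 1 else 0, ?_, ?_, ?_, ?_⟩
      · simp [Finset.sum_ite_eq']
      · simp [Finset.sum_ite_eq']
      · intro j; simp only []; split <;> norm_num
      · intro j
        by_cases hj : j = i
        · subst hj; simpa using hy
        · simp [hj, Matrix.mulVec_zero]
    · rintro x ⟨xs, ys, lam, hx, hsum, hpos, hineq⟩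
        x' ⟨xs', ys', lam', hx', hsum', hpos', hineq'⟩ a b ha hb hab
      refine ⟨fun i => a • xs i + b • xs' i, fun i => a • ys i + b • ys' i,
        fun i => a * lam i + b * lam' i, ?_, ?_, ?_, ?_⟩
      · rw [hx, hx', Finset.smul_sum, Finset.smul_sum, ← Finset.sum_add_distrib]
      · rw [Finset.sum_add_distrib, ← Finset.mul_sum, ← Finset.mul_sum, hsum, hsum']
        simpa using hab
      · intro i; have := hpos i; have := hpos' i; positivity
      · intro i j
        have h1 := hineq i j
        have h2 := hineq' i j
        simp only [Matrix.mulVec_add, Matrix.mulVec_smul, Pi.add_apply, Pi.smul_apply,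
          smul_eq_mul] at h1 h2 ⊢
        nlinarith
  · -- RHS ⊆ convex hull
    rintro x ⟨xs, ys, lam, hx, hsum, hpos, hineq⟩
    classical
    set z : Fin k → Fin n → ℝ :=
      fun i => if lam i = 0 then (hne i).choose else (lam i)⁻¹ • xs i with hz
    have hzmem : ∀ i, z i ∈ P i := by
      intro i
      rw [hz]
      by_cases h0 : lam i = 0
      · simpa [h0] using (hne i).choose_spec
      · simp only [h0, if_false]
        rw [hP i]
        refine ⟨(lam i)⁻¹ • ys i, fun j => ?_⟩
        have h1 := hineq i j
        have hli : 0 < lam i := lt_of_le_of_ne (hpos i) (Ne.symm h0)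
        simp only [Matrix.mulVec_smul, Pi.add_apply, Pi.smul_apply, smul_eq_mul] at h1 ⊢
        rw [← mul_add]
        rw [inv_mul_le_iff₀ hli]
        linarith [h1]
    have hxs : ∀ i, xs i = lam i • z i := by
      intro i
      by_cases h0 : lam i = 0
      · have hzero : xs i = 0 := by
          apply balas_rec_zero (A i) (B i) (d i) (P i) (hP i) (hne i) (hbdd i)
            (y' := ys i)
          have := hineq i
          simpa [h0] using this
        simp [hzero, h0]
      · simp only [hz, h0, if_false, smul_smul]
        rw [mul_inv_cancel₀ h0, one_smul]
    have hxeq : x = ∑ i, lam i • z i := by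
      rw [hx]; exact Finset.sum_congr rfl fun i _ => hxs i
    have : x = Finset.univ.centerMass lam z := by
      rw [Finset.centerMass_eq_of_sum_1 _ _ hsum, hxeq]
    rw [this]
    exact Finset.centerMass_mem_convexHull _ (fun i _ => hpos i) (by rw [hsum]; norm_num)
      (fun i _ => Set.mem_iUnion.mpr ⟨i, hzmem i⟩)
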